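/- Fix p ∈ (0,1). Let E, V, S : ℝ → ℝ be differentiable at 0 with E(0) = m, E'(0) = m_j, V(0) = v, V'(0) = v_j, S(0) = s, S'(0) = e_j, where v > m and s > v. Define θ(h) = (1−p)·(S(h) − V(h))/(V(h) − E(h)) and G(h) = ((1−p)·S(h) + θ(h)·E(h))/(1 − p + θ(h)). Then G is differentiable at 0 with derivative G'(0) = ((1−p)·e_j + θ(0)·m_j)/(1−p+θ(0)) − θ'(0)·(G(0) − m)/(1−p+θ(0)), where θ'(0) = θ(0)·[(e_j − v_j)/(s − v) − (v_j − m_j)/(v − m)]. -/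

import Mathlib

open MeasureTheory Set

set_option maxHeartbeats 2000000 in
/-- Fix `p ∈ (0,1)`. With `E, V, S` differentiable at `0`
(values `m, v, s`, derivatives `mj, vj, ej`, `v > m`, `s > v`), the PELVaR functional
`G h = ((1-p)·S h + T h·E h)/(1 - p + T h)` built from the θ-index
`T h = (1-p)·(S h - V h)/(V h - E h)` is differentiable at `0` with derivative
`((1-p)·ej + T 0·mj)/(1-p+T 0) - T'·(G 0 - m)/(1-p+T 0)`, where
`T' = T 0·[(ej - vj)/(s - v) - (vj - mj)/(v - m)]`. -/
theorem pelvar_euler_allocation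
    (p : ℝ) (hp : p ∈ Set.Ioo (0:ℝ) 1)
    (E V S : ℝ → ℝ) (m v s mj vj ej : ℝ)
    (hE : HasDerivAt E mj 0) (hV : HasDerivAt V vj 0) (hS : HasDerivAt S ej 0)
    (hE0 : E 0 = m) (hV0 : V 0 = v) (hS0 : S 0 = s)
    (hvm : m < v) (hsv : v < s)
    (T : ℝ → ℝ) (hT : ∀ h, T h = (1 - p) * (S h - V h) / (V h - E h))
    (G : ℝ → ℝ) (hG : ∀ h, G h = ((1 - p) * S h + T h * E h) / (1 - p + T h))
    (T' : ℝ) (hT' : T' = T 0 * ((ej - vj) / (s - v) - (vj - mj) / (v - m))) :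
    HasDerivAt G
      (((1 - p) * ej + T 0 * mj) / (1 - p + T 0)
        - T' * (G 0 - m) / (1 - p + T 0)) 0 := by
  have hTe : T = fun h => (1 - p) * (S h - V h) / (V h - E h) := funext hT
  have hGe : G = fun h => ((1 - p) * S h + T h * E h) / (1 - p + T h) := funext hG
  subst hTe
  subst hGe
  have hp1 : (0:ℝ) < 1 - p := by linarith [hp.2]
  have hvm' : v - m ≠ 0 := by linarith
  have hsv' : s - v ≠ 0 := by linarith
  have hden : V 0 - E 0 ≠ 0 := by rw [hV0, hE0]; exact hvm'
  have hT0 : (1 - p) * (S 0 - V 0) / (V 0 - E 0) = (1 - p) * (s - v) / (v - m) := by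
    rw [hV0, hE0, hS0]
  have hT0pos : 0 < (1 - p) * (S 0 - V 0) / (V 0 - E 0) := by
    rw [hT0]
    exact div_pos (mul_pos hp1 (by linarith)) (by linarith)
  have hD0 : 1 - p + (1 - p) * (S 0 - V 0) / (V 0 - E 0) ≠ 0 := by
    have := hT0pos; linarith
  -- derivative of T
  have hnum1 : HasDerivAt (fun h => (1 - p) * (S h - V h)) ((1 - p) * (ej - vj)) 0 :=
    (hS.sub hV).const_mul _
  have hden1 : HasDerivAt (fun h => V h - E h) (vj - mj) 0 := hV.sub hE
  have hTd' := hnum1.div hden1 hden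
  have hTval : T' = ((1 - p) * (ej - vj) * (V 0 - E 0)
      - (1 - p) * (S 0 - V 0) * (vj - mj)) / (V 0 - E 0) ^ 2 := by
    rw [hT', hT 0, hV0, hE0, hS0]
    field_simp
  have hTd : HasDerivAt (fun h => (1 - p) * (S h - V h) / (V h - E h)) T' 0 := by
    rw [hTval]; exact hTd'
  -- derivative of G numerator
  have hnum2 : HasDerivAt (fun h => (1 - p) * S h + ((1 - p) * (S h - V h) / (V h - E h)) * E h)
      ((1 - p) * ej + (T' * E 0 + ((1 - p) * (S 0 - V 0) / (V 0 - E 0)) * mj)) 0 :=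
    (hS.const_mul _).add (hTd.mul hE)
  have hden2 : HasDerivAt (fun h => 1 - p + (1 - p) * (S h - V h) / (V h - E h))
      T' 0 := by
    simpa using hTd.const_add (1 - p)
  have hGd := hnum2.div hden2 hD0
  convert hGd using 1
  · rfl
  · rfl
  · rfl
  simp only [hE0, hV0, hS0]
  have hDpos : 0 < (1 - p) * (s - v) / (v - m) :=
    div_pos (mul_pos hp1 (by linarith)) (by linarith)
  have hD : 1 - p + (1 - p) * (s - v) / (v - m) ≠ 0 := by linarith
  generalize hu : (1 - p) * (s - v) / (v - m) = u at hD ⊢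
  field_simp
  ring
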